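/- Let (L|K,v) be a unibranched Kummer extension of valued fields of prime degree q with q ≠ char Kv. Then: (1) if [Lv : Kv] = q, there exists a Kummer generator η ∈ O_L^× with vη = 0 such that ηv is a Kummer generator of the residue extension Lv|Kv, i.e., Lv = Kv(ηv) and (ηv)^q ∈ Kv; (2) if (vL : vK) = q, there exists a Kummer generator η ∈ L such that vL = vK + ℤ·vη. -/

import Mathlib

open scoped TensorProduct

set_option maxHeartbeats 1000000
set_option synthInstance.maxHeartbeats 400000

noncomputable section

namespace VP

universe u

variable {Γ : Type*} [LinearOrderedCommGroupWithZero Γ]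

/-! ### Ordered abelian group notions (multiplicative, inside `Γˣ`) -/

/-- `H` is a convex subgroup of the ordered abelian group `S`. -/
def ConvexIn (S H : Subgroup Γˣ) : Prop :=
  H ≤ S ∧ ∀ a ∈ H, ∀ b ∈ S, 1 ≤ b → b ≤ a → b ∈ H

/-- the element `γ : Γ` is (the coercion of) a member of `H`. -/
def MemVal (H : Subgroup Γˣ) (γ : Γ) : Prop := ∃ u ∈ H, (u : Γ) = γ

/-- The smallest convex subgroup of `S` containing (the element of `S` with value) `γ`. -/
def smallestConvexIn (S : Subgroup Γˣ) (γ : Γ) : Subgroup Γˣ :=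
  sInf {H | ConvexIn S H ∧ MemVal H γ}

/-- The largest convex subgroup of `S` not containing `γ`. -/
def largestConvexAvoiding (S : Subgroup Γˣ) (γ : Γ) : Subgroup Γˣ :=
  sSup {H | ConvexIn S H ∧ ¬ MemVal H γ}

/-- The archimedean component of `S` at `γ`, i.e. the quotient of the smallest convex
subgroup containing `γ` by the largest convex subgroup avoiding `γ`, is a discretely
ordered group, i.e. has a smallest element `> 1`. -/
def ArchComponentDiscrete (S : Subgroup Γˣ) (γ : Γ) : Prop :=
  ∃ a ∈ smallestConvexIn S γ, 1 < a ∧ a ∉ largestConvexAvoiding S γ ∧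
    ∀ b ∈ smallestConvexIn S γ, 1 < b → b ∉ largestConvexAvoiding S γ →
      ∃ h ∈ largestConvexAvoiding S γ, a ≤ b * h

/-! ### Value groups, valuation rings, residue fields -/

/-- The value group of a valuation on a field, as a subgroup of `Γˣ`. -/
def valueGroup {L : Type*} [Field L] (v : Valuation L Γ) : Subgroup Γˣ :=
  MonoidHom.range (Units.map (v.toMonoidWithZeroHom.toMonoidHom))

section homs

variable {A B C : Type*} [Field A] [Field B] [Field C]

/-- The inclusion of valuation rings induced by a field embedding. -/
def extHom (f : A →+* B) (v : Valuation B Γ) :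
    (v.comap f).valuationSubring →+* v.valuationSubring where
  toFun x := ⟨f x.1, x.2⟩
  map_one' := Subtype.ext (map_one f)
  map_mul' x y := Subtype.ext (map_mul f x.1 y.1)
  map_zero' := Subtype.ext (map_zero f)
  map_add' x y := Subtype.ext (map_add f x.1 y.1)

/-- The inclusion of valuation rings in an intermediate stage of a tower. -/
def towerHom (g : A →+* B) (h : B →+* C) (f : A →+* C) (hf : h.comp g = f)
    (v : Valuation C Γ) :
    (v.comap f).valuationSubring →+* (v.comap h).valuationSubring where
  toFun x := ⟨g x.1, by subst hf; exact x.2⟩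
  map_one' := Subtype.ext (map_one g)
  map_mul' x y := Subtype.ext (map_mul g x.1 y.1)
  map_zero' := Subtype.ext (map_zero g)
  map_add' x y := Subtype.ext (map_add g x.1 y.1)

theorem one_of_mul_eq_one {x y : Γ} (hx : x ≤ 1) (hy : y ≤ 1) (hxy : x * y = 1) :
    x = 1 := by
  rcases lt_or_eq_of_le hx with hx' | hx'
  · exfalso
    have : x * y < 1 := by
      calc x * y ≤ x * 1 := by
            gcongr
        _ = x := mul_one x
        _ < 1 := hx'
    rw [hxy] at this
    exact lt_irrefl _ this
  · exact hx'

/-- A ring homomorphism between valuation rings which is compatible with the valuations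
is a local homomorphism. -/
theorem isLocalHom_of_map_val {u : Valuation A Γ} {w : Valuation B Γ}
    (φ : u.valuationSubring →+* w.valuationSubring)
    (hφ : ∀ x : u.valuationSubring, w (φ x : B) = u (x : A)) :
    IsLocalHom φ := by
  constructor
  intro a ha
  rcases ha with ⟨uu, huu⟩
  have hprod : ((uu : w.valuationSubring) : B) * (((uu⁻¹ : _) : w.valuationSubring) : B) = 1 := by
    norm_cast
    rw [mul_inv_cancel]
    rfl
  have h1 : w ((φ a : B)) = 1 := by
    apply one_of_mul_eq_one (x := w ((φ a : B))) (y := w (((uu⁻¹ : _) : w.valuationSubring) : B))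
    · exact (φ a).2
    · exact ((uu⁻¹ : _) : w.valuationSubring).2
    · rw [← map_mul]
      rw [huu] at hprod
      rw [hprod, map_one]
  have hu1 : u (a : A) = 1 := by rw [← hφ a, h1]
  have hane : (a : A) ≠ 0 := by
    intro h0
    rw [h0, map_zero] at hu1
    exact zero_ne_one hu1
  have hinv : ((a : A)⁻¹) ∈ u.valuationSubring := by
    rw [Valuation.mem_valuationSubring_iff, map_inv₀, hu1, inv_one]
  refine IsUnit.of_mul_eq_one (a := a) ⟨(a : A)⁻¹, hinv⟩ ?_
  exact Subtype.ext (mul_inv_cancel₀ hane)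

theorem extHom_val (f : A →+* B) (v : Valuation B Γ) (x : (v.comap f).valuationSubring) :
    v ((extHom f v x : B)) = (v.comap f) (x : A) := rfl

theorem towerHom_val (g : A →+* B) (h : B →+* C) (f : A →+* C) (hf : h.comp g = f)
    (v : Valuation C Γ) (x : (v.comap f).valuationSubring) :
    (v.comap h) ((towerHom g h f hf v x : B)) = (v.comap f) (x : A) := by
  subst hf
  rfl

instance extHom_isLocalHom (f : A →+* B) (v : Valuation B Γ) : IsLocalHom (extHom f v) :=
  isLocalHom_of_map_val (extHom f v) (extHom_val f v)

instance towerHom_isLocalHom (g : A →+* B) (h : B →+* C) (f : A →+* C) (hf : h.comp g = f)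
    (v : Valuation C Γ) : IsLocalHom (towerHom g h f hf v) :=
  isLocalHom_of_map_val (towerHom g h f hf v) (towerHom_val g h f hf v)

/-- The algebra structure on the valuation ring of `v` over the valuation ring of the
restriction of `v`. -/
def extAlgebra (f : A →+* B) (v : Valuation B Γ) :
    Algebra (v.comap f).valuationSubring v.valuationSubring :=
  (extHom f v).toAlgebra

/-- The algebra structure between valuation rings of restrictions in a tower. -/
def towerAlgebra (g : A →+* B) (h : B →+* C) (f : A →+* C) (hf : h.comp g = f)
    (v : Valuation C Γ) :
    Algebra (v.comap f).valuationSubring (v.comap h).valuationSubring :=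
  (towerHom g h f hf v).toAlgebra

/-- The induced map between residue fields. -/
def extResMap (f : A →+* B) (v : Valuation B Γ) :
    IsLocalRing.ResidueField (v.comap f).valuationSubring →+*
      IsLocalRing.ResidueField v.valuationSubring :=
  IsLocalRing.ResidueField.map (extHom f v)

/-- The residue field of the extension as an algebra over the residue field of the base. -/
def extResAlgebra (f : A →+* B) (v : Valuation B Γ) :
    Algebra (IsLocalRing.ResidueField (v.comap f).valuationSubring)
      (IsLocalRing.ResidueField v.valuationSubring) :=
  (extResMap f v).toAlgebra

/-- The induced map between residue fields in a tower. -/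
def towerResMap (g : A →+* B) (h : B →+* C) (f : A →+* C) (hf : h.comp g = f)
    (v : Valuation C Γ) :
    IsLocalRing.ResidueField (v.comap f).valuationSubring →+*
      IsLocalRing.ResidueField (v.comap h).valuationSubring :=
  IsLocalRing.ResidueField.map (towerHom g h f hf v)

def towerResAlgebra (g : A →+* B) (h : B →+* C) (f : A →+* C) (hf : h.comp g = f)
    (v : Valuation C Γ) :
    Algebra (IsLocalRing.ResidueField (v.comap f).valuationSubring)
      (IsLocalRing.ResidueField (v.comap h).valuationSubring) :=
  (towerResMap g h f hf v).toAlgebra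

end homs

section ext

variable (K : Type*) {L : Type*} [Field K] [Field L] [Algebra K L]

/-- The extension of valued fields `(L|K,v)` is unibranched: the restriction of `v` to `K`
has a unique extension to `L` up to equivalence (phrased via valuation subrings of `L`
lying over the valuation subring of the restriction of `v` to `K`). -/
def IsUnibranched (v : Valuation L Γ) : Prop :=
  ∀ O : ValuationSubring L,
    (∀ x : K, algebraMap K L x ∈ O ↔ v (algebraMap K L x) ≤ 1) → O = v.valuationSubring

/-- The ramification index `e(L|K,v) = (vL : vK)`. -/
def ramificationIndex (v : Valuation L Γ) : ℕ :=
  (valueGroup (v.comap (algebraMap K L))).relIndex (valueGroup v)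

/-- The residue degree `f(L|K,v) = [Lv : Kv]`. -/
def residueDegree (v : Valuation L Γ) : ℕ :=
  letI := extResAlgebra (algebraMap K L) v
  Module.finrank (IsLocalRing.ResidueField (v.comap (algebraMap K L)).valuationSubring)
    (IsLocalRing.ResidueField v.valuationSubring)

/-- `(L|K,v)` is defectless: `[L:K] = e(L|K,v) ⬝ f(L|K,v)`. -/
def IsDefectless (v : Valuation L Γ) : Prop :=
  Module.finrank K L = ramificationIndex K v * residueDegree K v

/-- The subring `𝒪_K[x]` of `L` generated by the valuation ring of `v|_K` and `x : L`. -/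
def adjoinRing (v : Valuation L Γ) (x : L) : Subring L :=
  Subring.closure
    ((((v.comap (algebraMap K L)).valuationSubring.toSubring.map (algebraMap K L)) : Set L) ∪ {x})

/-- `vL = vK + ℤ ⬝ vx`; i.e. the value of `x` generates the value group extension. -/
def GeneratesValueGroup (v : Valuation L Γ) (x : L) : Prop :=
  ∀ y : L, y ≠ 0 → ∃ (c : K) (n : ℤ), c ≠ 0 ∧ v y = v (algebraMap K L c) * (v x) ^ n

/-- `θ` is an Artin-Schreier generator of `L|K` (for degree `p`):
`L = K(θ)` and `θ^p - θ ∈ K`. -/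
def IsASGenerator (p : ℕ) (θ : L) : Prop :=
  IntermediateField.adjoin K {θ} = ⊤ ∧ θ ^ p - θ ∈ (algebraMap K L).range

/-- `η` is a Kummer generator of `L|K` (of degree `q`): `L = K(η)` and `η^q ∈ K`. -/
def IsKummerGenerator (q : ℕ) (η : L) : Prop :=
  IntermediateField.adjoin K {η} = ⊤ ∧ η ^ q ∈ (algebraMap K L).range

/-- `σ` belongs to the inertia group of `(L|K,v)`: it lies in the decomposition group
(`v ∘ σ` is equivalent to `v`) and `v (σ x - x) > 0` (additively) for all `x ∈ 𝒪_L`. -/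
def InInertia (v : Valuation L Γ) (σ : L ≃ₐ[K] L) : Prop :=
  (v.comap σ.toAlgHom.toRingHom).IsEquiv v ∧ ∀ x : L, v x ≤ 1 → v (σ x - x) < 1

/-- The inertia field of `(L|K,v)`: the fixed field of the inertia group. -/
def inertiaField (v : Valuation L Γ) : IntermediateField K L where
  carrier := {x | ∀ σ : L ≃ₐ[K] L, InInertia K v σ → σ x = x}
  mul_mem' := fun {a b} ha hb σ hσ => by rw [map_mul, ha σ hσ, hb σ hσ]
  one_mem' := fun σ _ => map_one σ
  add_mem' := fun {a b} ha hb σ hσ => by rw [map_add, ha σ hσ, hb σ hσ]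
  zero_mem' := fun σ _ => map_zero σ
  algebraMap_mem' := fun r σ _ => σ.commutes r
  inv_mem' := fun x hx σ hσ => by rw [map_inv₀, hx σ hσ]

end ext


section extinst

variable {A B : Type*} [Field A] [Field B] [Algebra A B]

/-- The valuation ring of `v` is an algebra over the valuation ring of its restriction. -/
instance extAlgebraI (v : Valuation B Γ) :
    Algebra (v.comap (algebraMap A B)).valuationSubring v.valuationSubring :=
  extAlgebra (algebraMap A B) v

/-- The residue field of `v` is an algebra over the residue field of its restriction. -/
instance extResAlgebraI (v : Valuation B Γ) :
    Algebra (IsLocalRing.ResidueField (v.comap (algebraMap A B)).valuationSubring)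
      (IsLocalRing.ResidueField v.valuationSubring) :=
  extResAlgebra (algebraMap A B) v

end extinst

section inter

variable {K L : Type*} [Field K] [Field L] [Algebra K L] (v : Valuation L Γ)

instance interBaseAlgebra (E : IntermediateField K L) :
    Algebra (v.comap (algebraMap K L)).valuationSubring
      (v.comap (algebraMap E L)).valuationSubring :=
  towerAlgebra (algebraMap K E) (algebraMap E L) (algebraMap K L)
    (IsScalarTower.algebraMap_eq K E L).symm v

instance interBaseResAlgebra (E : IntermediateField K L) :
    Algebra (IsLocalRing.ResidueField (v.comap (algebraMap K L)).valuationSubring)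
      (IsLocalRing.ResidueField (v.comap (algebraMap E L)).valuationSubring) :=
  towerResAlgebra (algebraMap K E) (algebraMap E L) (algebraMap K L)
    (IsScalarTower.algebraMap_eq K E L).symm v

/-- The algebra structure between the valuation rings of restrictions of `v` along a
step `E ≤ E'` of intermediate fields. -/
def stepAlgebra {E E' : IntermediateField K L} (h : E ≤ E') :
    Algebra (v.comap (algebraMap E L)).valuationSubring
      (v.comap (algebraMap E' L)).valuationSubring :=
  towerAlgebra (IntermediateField.inclusion h).toRingHom (algebraMap E' L) (algebraMap E L)
    (RingHom.ext fun _ => rfl) v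

/-- The corresponding algebra structure between residue fields. -/
def stepResAlgebra {E E' : IntermediateField K L} (h : E ≤ E') :
    Algebra (IsLocalRing.ResidueField (v.comap (algebraMap E L)).valuationSubring)
      (IsLocalRing.ResidueField (v.comap (algebraMap E' L)).valuationSubring) :=
  towerResAlgebra (IntermediateField.inclusion h).toRingHom (algebraMap E' L) (algebraMap E L)
    (RingHom.ext fun _ => rfl) v

def stepScalarTower {E E' : IntermediateField K L} (h : E ≤ E') :
    letI := stepAlgebra v h
    IsScalarTower (v.comap (algebraMap K L)).valuationSubring
      (v.comap (algebraMap E L)).valuationSubring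
      (v.comap (algebraMap E' L)).valuationSubring := by
  letI := stepAlgebra v h
  refine IsScalarTower.of_algebraMap_eq fun x => ?_
  rfl

end inter

section tower3

variable {K L M : Type*} [Field K] [Field L] [Field M] [Algebra K L] [Algebra L M]
  [Algebra K M] [IsScalarTower K L M] (v : Valuation M Γ)

instance midAlgebra :
    Algebra (v.comap (algebraMap K M)).valuationSubring
      (v.comap (algebraMap L M)).valuationSubring :=
  towerAlgebra (algebraMap K L) (algebraMap L M) (algebraMap K M)
    (IsScalarTower.algebraMap_eq K L M).symm v

instance rings3ScalarTower :
    IsScalarTower (v.comap (algebraMap K M)).valuationSubring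
      (v.comap (algebraMap L M)).valuationSubring v.valuationSubring :=
  IsScalarTower.of_algebraMap_eq fun x =>
    Subtype.ext (IsScalarTower.algebraMap_apply K L M (x : K))

end tower3

/-- `(K,v)` is henselian: every algebraic field extension of `K` admits a unique
extension of `v` up to equivalence (phrased via valuation subrings lying over the
valuation ring of `v`). -/
def IsHenselianValued {K : Type u} [Field K] (v : Valuation K Γ) : Prop :=
  ∀ (L : Type u) [Field L] [Algebra K L], Algebra.IsAlgebraic K L →
    ∃! O : ValuationSubring L, ∀ x : K, algebraMap K L x ∈ O ↔ v x ≤ 1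


/-- `B|A` is a tower of finite Galois extensions. -/
def IsGaloisTower (A B : Type*) [Field A] [Field B] [Algebra A B] : Prop :=
  ∃ (n : ℕ) (ch : Fin (n + 1) → IntermediateField A B),
    ch 0 = ⊥ ∧ ch (Fin.last n) = ⊤ ∧
    ∀ i : Fin n, ∃ h : ch i.castSucc ≤ ch i.succ,
      letI : Algebra (ch i.castSucc) (ch i.succ) :=
        (IntermediateField.inclusion h).toRingHom.toAlgebra
      letI : Module (ch i.castSucc) (ch i.succ) := Algebra.toModule
      IsGalois (ch i.castSucc) (ch i.succ) ∧ FiniteDimensional (ch i.castSucc) (ch i.succ)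

section dr

variable {K : Type*} [Field K]

/-- Condition (DRvg): for convex subgroups `Γ₁ ⊊ Γ₂` of the value group `vK`, the
quotient `Γ₂/Γ₁` is not isomorphic to `ℤ`. -/
def DRvg (v : Valuation K Γ) : Prop :=
  ∀ H₁ H₂ : Subgroup Γˣ, ConvexIn (valueGroup v) H₁ → ConvexIn (valueGroup v) H₂ →
    H₁ < H₂ → IsEmpty ((↥H₂ ⧸ H₁.subgroupOf H₂) ≃* Multiplicative ℤ)

/-- Condition (DRvr): if the residue characteristic is `p > 0`, then the `p`-power map on
`𝒪_{K̂}/p𝒪_{K̂}` is surjective, where `𝒪_{K̂}` is the valuation ring of the completion. -/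
def DRvr (v : Valuation K Γ) : Prop :=
  ∀ p : ℕ, p.Prime → CharP (IsLocalRing.ResidueField v.valuationSubring) p →
    letI : Valued K Γ := Valued.mk' v
    Function.Surjective
      (fun x : (Valued.extensionValuation (K := K) (Γ₀ := Γ)).integer ⧸
          (Ideal.span {(p : (Valued.extensionValuation (K := K) (Γ₀ := Γ)).integer)}) => x ^ p)

/-- `(K,v)` is a deeply ramified field: conditions (DRvg) and (DRvr) hold. -/
def IsDeeplyRamified (v : Valuation K Γ) : Prop := DRvg v ∧ DRvr v

/-- `(K,v)` is nontrivially valued. -/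
def IsNontriviallyValued (v : Valuation K Γ) : Prop := ∃ x : K, x ≠ 0 ∧ v x ≠ 1

end dr

end VP
open VP IsLocalRing

universe u v


section Aux18

variable {K L : Type*} [Field K] [Field L] [Algebra K L]
variable {Γ : Type*} [LinearOrderedCommGroupWithZero Γ]

theorem aux_pow_eq_one {γ : Γ} {n : ℕ} (hn : n ≠ 0) (h : γ ^ n = 1) : γ = 1 :=
  (pow_eq_one_iff.1 h).resolve_right hn

theorem aux_val_rou (v : Valuation L Γ) {n : ℕ} (hn : n ≠ 0) (x : K) (hx : x ^ n = 1) :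
    v (algebraMap K L x) = 1 :=
  aux_pow_eq_one hn (by rw [← map_pow, ← map_pow, hx, map_one, map_one])

theorem aux_equiv (v : Valuation L Γ) (huni : IsUnibranched K v) (τ : L ≃ₐ[K] L) :
    (v.comap τ.toAlgHom.toRingHom).IsEquiv v := by
  apply Valuation.isEquiv_of_val_le_one
  intro x
  have hO : (v.comap τ.toAlgHom.toRingHom).valuationSubring = v.valuationSubring := by
    apply huni
    intro c
    simp only [Valuation.mem_valuationSubring_iff, Valuation.comap_apply, AlgHom.toRingHom_eq_coe,
      RingHom.coe_coe, AlgHom.coe_coe, AlgEquiv.toAlgHom_eq_coe, AlgEquiv.commutes]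
    exact Iff.of_eq (congrArg (fun t => v t ≤ 1) (τ.commutes c))
  have := SetLike.ext_iff.1 hO x
  simpa only [Valuation.mem_valuationSubring_iff] using this

theorem aux_lt_one (v : Valuation L Γ) (huni : IsUnibranched K v) (τ : L ≃ₐ[K] L) (x : L) :
    v (τ x) < 1 ↔ v x < 1 :=
  Valuation.isEquiv_iff_val_lt_one.mp (aux_equiv v huni τ)

theorem aux_pow_apply (σ : L ≃ₐ[K] L) (e : K) (a : L) (he : σ a = algebraMap K L e * a) (k : ℕ) :
    (σ ^ k) a = algebraMap K L (e ^ k) * a := by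
  induction k with
  | zero => simp
  | succ n ih =>
      rw [pow_succ, AlgEquiv.mul_apply, he, map_mul, AlgEquiv.commutes, ih, pow_succ, map_mul]
      ring

theorem aux_geom_sum {g : K} {q : ℕ} (hg : g ≠ 1) (hgq : g ^ q = 1) :
    ∑ k ∈ Finset.range q, g ^ k = 0 := by
  rw [geom_sum_eq hg, hgq, sub_self, zero_div]

theorem aux_master (v : Valuation L Γ) (huni : IsUnibranched K v)
    {q : ℕ} (hq : q.Prime) {a : L} (ha : a ≠ 0)
    {σ : L ≃ₐ[K] L} {e : K} (hσa : σ a = algebraMap K L e * a)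
    (horde : orderOf e = q)
    (hvq : v (algebraMap K L (q : K)) = 1)
    (c : ℕ → K) {i0 : ℕ} (hi0 : i0 < q) (hc0 : c i0 ≠ 0)
    (hmax : ∀ i ∈ Finset.range q,
      v (algebraMap K L (c i) * a ^ i) ≤ v (algebraMap K L (c i0) * a ^ i0)) :
    v (∑ i ∈ Finset.range q, algebraMap K L (c i) * a ^ i)
      = v (algebraMap K L (c i0) * a ^ i0) := by
  have hq0 : q ≠ 0 := hq.ne_zero
  have heq : e ^ q = 1 := by rw [← horde]; exact pow_orderOf_eq_one e
  have he0 : e ≠ 0 := by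
    intro h0
    rw [h0, zero_pow hq0] at heq
    exact zero_ne_one heq
  set T : L := algebraMap K L (c i0) * a ^ i0 with hT
  have hTne : T ≠ 0 :=
    mul_ne_zero (fun h => hc0 ((map_eq_zero _).1 h)) (pow_ne_zero _ ha)
  have hvT : v T ≠ 0 := fun h => hTne (v.zero_iff.1 h)
  set y : L := ∑ i ∈ Finset.range q, algebraMap K L (c i) * a ^ i with hy
  have hle : v y ≤ v T := v.map_sum_le hmax
  rcases eq_or_lt_of_le hle with h | hlt
  · exact h
  exfalso
  set f : K := (e ^ i0)⁻¹ with hf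
  have hei0 : e ^ i0 ≠ 0 := pow_ne_zero _ he0
  have hepow : ∀ m : ℕ, (e ^ m) ^ q = 1 := fun m => by
    rw [← pow_mul, mul_comm m q, pow_mul, heq, one_pow]
  have hfq : f ^ q = 1 := by rw [hf, inv_pow, hepow, inv_one]
  have hgpow : ∀ i : ℕ, (f * e ^ i) ^ q = 1 := fun i => by
    rw [mul_pow, hfq, hepow, one_mul]
  have hgne : ∀ i ∈ Finset.range q, i ≠ i0 → f * e ^ i ≠ 1 := by
    intro i hi hne hone
    rw [hf, inv_mul_eq_one₀ hei0] at hone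
    exact hne (pow_injOn_Iio_orderOf (by rw [horde]; exact hi0)
      (by rw [horde]; exact Finset.mem_range.1 hi) hone).symm
  have hterm : ∀ k i : ℕ, (σ ^ k) (algebraMap K L (c i) * a ^ i)
      = (algebraMap K L (c i) * a ^ i) * algebraMap K L ((e ^ i) ^ k) := by
    intro k i
    rw [map_mul, AlgEquiv.commutes, map_pow, aux_pow_apply σ e a hσa k, mul_pow, ← map_pow,
      ← pow_mul, ← pow_mul, mul_comm k i]
    ring
  have hGi0 : ∑ k ∈ Finset.range q, (f * e ^ i0) ^ k = (q : K) := by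
    rw [hf, inv_mul_cancel₀ hei0]
    simp
  have hiden : ∑ k ∈ Finset.range q, algebraMap K L (f ^ k) * (σ ^ k) y
      = algebraMap K L (q : K) * T := by
    have h1 : ∀ k ∈ Finset.range q, algebraMap K L (f ^ k) * (σ ^ k) y
        = ∑ i ∈ Finset.range q,
            (algebraMap K L (c i) * a ^ i) * algebraMap K L ((f * e ^ i) ^ k) := by
      intro k _
      rw [hy, map_sum, Finset.mul_sum]
      refine Finset.sum_congr rfl fun i _ => ?_
      rw [hterm k i, mul_pow, map_mul]
      ring
    rw [Finset.sum_congr rfl h1, Finset.sum_comm]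
    have h2 : ∀ i ∈ Finset.range q,
        (∑ k ∈ Finset.range q, (algebraMap K L (c i) * a ^ i) * algebraMap K L ((f * e ^ i) ^ k))
        = (algebraMap K L (c i) * a ^ i)
            * algebraMap K L (∑ k ∈ Finset.range q, (f * e ^ i) ^ k) := by
      intro i _
      rw [map_sum, Finset.mul_sum]
    rw [Finset.sum_congr rfl h2,
      Finset.sum_eq_single_of_mem i0 (Finset.mem_range.2 hi0) (fun i hi hne => by
        rw [aux_geom_sum (hgne i hi hne) (hgpow i), map_zero, mul_zero]), hGi0]
    ring
  have hσT : ∀ k : ℕ, v ((σ ^ k) T) = v T := by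
    intro k
    rw [hT, hterm k i0, Valuation.map_mul,
      aux_val_rou v hq0 _ (by rw [← pow_mul, mul_comm, pow_mul, hepow, one_pow]), mul_one]
  have hvTpos : (0 : Γ) < v T := zero_lt_iff.2 hvT
  have hσy : ∀ k : ℕ, v ((σ ^ k) y) < v T := by
    intro k
    have hz : v (y * T⁻¹) < 1 := by
      rw [Valuation.map_mul, map_inv₀, ← div_eq_mul_inv, div_lt_iff₀ hvTpos, one_mul]
      exact hlt
    have h2 := (aux_lt_one v huni (σ ^ k) (y * T⁻¹)).2 hz
    rw [map_mul, map_inv₀, Valuation.map_mul, map_inv₀, ← div_eq_mul_inv] at h2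
    have hσTpos : (0 : Γ) < v ((σ ^ k) T) := by rw [hσT k]; exact hvTpos
    rw [div_lt_iff₀ hσTpos, one_mul, hσT k] at h2
    exact h2
  have hterms : ∀ k ∈ Finset.range q, v (algebraMap K L (f ^ k) * (σ ^ k) y) < v T := by
    intro k _
    rw [Valuation.map_mul,
      aux_val_rou v hq0 _ (by rw [← pow_mul, mul_comm, pow_mul, hfq, one_pow]), one_mul]
    exact hσy k
  have hS := v.map_sum_lt hvT hterms
  rw [hiden, Valuation.map_mul, hvq, one_mul] at hS
  exact lt_irrefl _ hS

theorem aux_expand {q : ℕ} (hq : 0 < q) (hdeg : Module.finrank K L = q) {a : L}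
    (hgen : IntermediateField.adjoin K {a} = ⊤) [FiniteDimensional K L] (y : L) :
    ∃ c : ℕ → K, y = ∑ i ∈ Finset.range q, algebraMap K L (c i) * a ^ i ∧
      ∀ i, q ≤ i → c i = 0 := by
  have hint : IsIntegral K a := IsIntegral.of_finite (R := K) (B := L) a
  have hmono := minpoly.monic hint
  have hdm : (minpoly K a).natDegree = q := by
    rw [← IntermediateField.adjoin.finrank hint, hgen, IntermediateField.finrank_top', hdeg]
  have hy : y ∈ (Polynomial.aeval (R := K) a).range := by
    rw [← Algebra.adjoin_singleton_eq_range_aeval,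
      ← IntermediateField.adjoin_simple_toSubalgebra_of_isAlgebraic hint.isAlgebraic, hgen]
    exact IntermediateField.mem_top
  rw [AlgHom.mem_range] at hy
  obtain ⟨P, hP⟩ := hy
  set r := P %ₘ minpoly K a with hr
  have hrd : r.natDegree < q := by
    rw [← hdm]
    apply Polynomial.natDegree_modByMonic_lt P hmono
    intro h1
    rw [h1, Polynomial.natDegree_one] at hdm
    omega
  have hyr : y = Polynomial.aeval a r := by
    conv_lhs => rw [← hP, ← Polynomial.modByMonic_add_div P (minpoly K a)]
    rw [map_add, map_mul, minpoly.aeval, zero_mul, add_zero]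
  refine ⟨fun i => r.coeff i, ?_,
    fun i hi => Polynomial.coeff_eq_zero_of_natDegree_lt (lt_of_lt_of_le hrd hi)⟩
  rw [hyr, Polynomial.aeval_eq_sum_range' hrd]
  exact Finset.sum_congr rfl fun i _ => Algebra.smul_def _ _

theorem aux_choose_max (v : Valuation L Γ) {q : ℕ} (a : L) (c : ℕ → K)
    (hne : ∃ i ∈ Finset.range q, c i ≠ 0) :
    ∃ i0 ∈ Finset.range q, c i0 ≠ 0 ∧ ∀ i ∈ Finset.range q,
      v (algebraMap K L (c i) * a ^ i) ≤ v (algebraMap K L (c i0) * a ^ i0) := by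
  classical
  obtain ⟨j, hj, hcj⟩ := hne
  set s := (Finset.range q).filter (fun i => c i ≠ 0) with hs
  have hsne : s.Nonempty := ⟨j, Finset.mem_filter.2 ⟨hj, hcj⟩⟩
  obtain ⟨i0, hi0s, hmax⟩ := s.exists_max_image (fun i => v (algebraMap K L (c i) * a ^ i)) hsne
  rw [hs, Finset.mem_filter] at hi0s
  refine ⟨i0, hi0s.1, hi0s.2, fun i hi => ?_⟩
  by_cases hci : c i = 0
  · rw [hci, map_zero, zero_mul, Valuation.map_zero]
    exact zero_le'
  · exact hmax i (Finset.mem_filter.2 ⟨hi, hci⟩)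

theorem aux_mem_maximalIdeal (v : Valuation L Γ) (x : v.valuationSubring) (h : v (x : L) < 1) :
    x ∈ IsLocalRing.maximalIdeal v.valuationSubring := by
  rw [IsLocalRing.mem_maximalIdeal, mem_nonunits_iff]
  intro hunit
  obtain ⟨w, hw⟩ := isUnit_iff_exists_inv.1 hunit
  have hcoe : (x : L) * (w : L) = 1 := by
    exact_mod_cast congrArg (fun t : v.valuationSubring => (t : L)) hw
  have h1 : v (x : L) = 1 :=
    one_of_mul_eq_one x.2 w.2 (by rw [← Valuation.map_mul, hcoe, Valuation.map_one])
  exact h.ne h1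

theorem aux_vq (v : Valuation L Γ) {q : ℕ} (hq : q.Prime)
    (hcharKv : ringChar
      (IsLocalRing.ResidueField (v.comap (algebraMap K L)).valuationSubring) ≠ q) :
    v (algebraMap K L (q : K)) = 1 := by
  set O := (v.comap (algebraMap K L)).valuationSubring with hO
  have hle : v (algebraMap K L (q : K)) ≤ 1 := by
    rw [map_natCast]
    have : ((q : ℕ) : L) = ∑ _i ∈ Finset.range q, (1 : L) := by simp
    rw [this]
    exact v.map_sum_le fun i _ => le_of_eq (Valuation.map_one v)
  rcases lt_or_eq_of_le hle with hlt | h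
  · exfalso
    have hnatO : (((q : ℕ) : O) : K) = ((q : ℕ) : K) := by push_cast; rfl
    have hmem : ((q : ℕ) : O) ∈ IsLocalRing.maximalIdeal O := by
      rw [IsLocalRing.mem_maximalIdeal, mem_nonunits_iff]
      intro hunit
      obtain ⟨w, hw⟩ := isUnit_iff_exists_inv.1 hunit
      have hcoe : (((q : ℕ) : O) : K) * (w : K) = 1 := by
        exact_mod_cast congrArg (fun t : O => (t : K)) hw
      have h1 : v.comap (algebraMap K L) (((q : ℕ) : O) : K) = 1 :=
        one_of_mul_eq_one ((q : ℕ) : O).2 w.2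
          (by rw [← Valuation.map_mul, hcoe, Valuation.map_one])
      rw [hnatO] at h1
      exact hlt.ne h1
    have hq0 : ((q : ℕ) : IsLocalRing.ResidueField O) = 0 := by
      rw [← map_natCast (IsLocalRing.residue O), IsLocalRing.residue_eq_zero_iff]
      exact hmem
    haveI := ringChar.charP (IsLocalRing.ResidueField O)
    have hdvd : ringChar (IsLocalRing.ResidueField O) ∣ q :=
      (CharP.cast_eq_zero_iff _ (ringChar (IsLocalRing.ResidueField O)) q).1 hq0
    rcases hq.eq_one_or_self_of_dvd _ hdvd with h1 | h1
    · have : ((1 : ℕ) : IsLocalRing.ResidueField O) = 0 :=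
        (CharP.cast_eq_zero_iff _ (ringChar (IsLocalRing.ResidueField O)) 1).2
          (h1 ▸ dvd_refl _)
      rw [Nat.cast_one] at this
      exact one_ne_zero this
    · exact hcharKv h1
  · exact h

theorem aux_algebraMap_res {K L : Type u} [Field K] [Field L] [Algebra K L]
    {Γ : Type v} [LinearOrderedCommGroupWithZero Γ] (v : Valuation L Γ)
    (x : (v.comap (algebraMap K L)).valuationSubring) :
    algebraMap (IsLocalRing.ResidueField (v.comap (algebraMap K L)).valuationSubring)
      (IsLocalRing.ResidueField v.valuationSubring) (IsLocalRing.residue _ x)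
      = IsLocalRing.residue _ (extHom (algebraMap K L) v x) :=
  IsLocalRing.ResidueField.map_residue _ _

end Aux18


/-- in a unibranched Kummer extension of prime degree `q ≠ char Kv`:
(1) if `[Lv : Kv] = q` there is a Kummer generator `η ∈ 𝒪_L^×` with `vη = 0` whose
residue is a Kummer generator of `Lv|Kv`; (2) if `(vL : vK) = q` there is a Kummer
generator whose value generates the value group extension. -/
theorem statement_18 {K L : Type u} [Field K] [Field L] [Algebra K L]
    {Γ : Type v} [LinearOrderedCommGroupWithZero Γ] (v : Valuation L Γ)
    (q : ℕ) (hq : q.Prime) [IsGalois K L] (hdeg : Module.finrank K L = q)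
    (hcharK : ringChar K ≠ q) (ζ : K) (hζ : IsPrimitiveRoot ζ q)
    (hcharKv : ringChar (ResidueField (v.comap (algebraMap K L)).valuationSubring) ≠ q)
    (huni : IsUnibranched K v) :
    (residueDegree K v = q →
      ∃ η : L, IsKummerGenerator K q η ∧ ∃ hη : v η = 1,
        IsUnit (⟨η, hη.le⟩ : v.valuationSubring) ∧
        Algebra.adjoin (ResidueField (v.comap (algebraMap K L)).valuationSubring)
          {IsLocalRing.residue _ (⟨η, hη.le⟩ : v.valuationSubring)} = ⊤ ∧
        (IsLocalRing.residue _ (⟨η, hη.le⟩ : v.valuationSubring)) ^ q ∈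
          (algebraMap (ResidueField (v.comap (algebraMap K L)).valuationSubring)
            (ResidueField v.valuationSubring)).range) ∧
    (ramificationIndex K v = q →
      ∃ η : L, IsKummerGenerator K q η ∧ GeneratesValueGroup K v η) := by
  classical
  haveI : Fact q.Prime := ⟨hq⟩
  haveI : FiniteDimensional K L :=
    FiniteDimensional.of_finrank_pos (by rw [hdeg]; exact hq.pos)
  haveI : IsCyclic (L ≃ₐ[K] L) :=
    isCyclic_of_prime_card (p := q)
    (by rw [IsGalois.card_aut_eq_finrank, hdeg])
  have hK : (primitiveRoots (Module.finrank K L) K).Nonempty := by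
    refine ⟨ζ, ?_⟩
    rw [mem_primitiveRoots (by rw [hdeg]; exact hq.pos), hdeg]
    exact hζ
  obtain ⟨a, hapow, hatop⟩ := exists_root_adjoin_eq_top_of_isCyclic K L hK
  rw [hdeg] at hapow
  obtain ⟨k0, hk0⟩ := hapow
  have ha0 : a ≠ 0 := by
    rintro rfl
    rw [IntermediateField.adjoin_zero] at hatop
    have h1 : Module.finrank K (⊥ : IntermediateField K L) = 1 := IntermediateField.finrank_bot
    rw [hatop, IntermediateField.finrank_top', hdeg] at h1
    exact hq.one_lt.ne' h1
  have hk00 : k0 ≠ 0 := by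
    intro h
    rw [h, map_zero] at hk0
    exact pow_ne_zero q ha0 hk0.symm
  have hva : v a ≠ 0 := fun h => ha0 (v.zero_iff.1 h)
  haveI : Nontrivial (L ≃ₐ[K] L) := Fintype.one_lt_card_iff_nontrivial.1
    (by rw [← Nat.card_eq_fintype_card, IsGalois.card_aut_eq_finrank, hdeg]; exact hq.one_lt)
  obtain ⟨σ, hσ1⟩ := exists_ne (1 : L ≃ₐ[K] L)
  have hσa_ne : σ a ≠ a := by
    intro hfix
    apply hσ1
    apply AlgEquiv.ext
    intro x
    have hx : x ∈ IntermediateField.adjoin K {a} := by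
      rw [hatop]; exact IntermediateField.mem_top
    have hfixall : σ x = x := by
      refine IntermediateField.adjoin_induction (p := fun z _ => σ z = z) (mem := ?_)
        (algebraMap := ?_) (add := ?_) (inv := ?_) (mul := ?_) (h := hx)
      · intro y hy
        rw [Set.mem_singleton_iff.1 hy]
        exact hfix
      · intro y
        exact σ.commutes y
      · intro z w _ _ hz hw
        rw [map_add, hz, hw]
      · intro z _ hz
        rw [map_inv₀, hz]
      · intro z w _ _ hz hw
        rw [map_mul, hz, hw]
    exact hfixall
  haveI : NeZero q := ⟨hq.ne_zero⟩
  have hζL : IsPrimitiveRoot (algebraMap K L ζ) q :=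
    hζ.map_of_injective (algebraMap K L).injective
  have hζ'q : (σ a * a⁻¹) ^ q = 1 := by
    have h1 : (σ a) ^ q = a ^ q := by rw [← map_pow, ← hk0, AlgEquiv.commutes, hk0]
    rw [mul_pow, inv_pow, h1, mul_inv_cancel₀ (pow_ne_zero q ha0)]
  obtain ⟨j, hj, hje⟩ := hζL.eq_pow_of_pow_eq_one hζ'q
  set e : K := ζ ^ j with he_def
  have hσa : σ a = algebraMap K L e * a := by
    rw [he_def, map_pow, hje, inv_mul_cancel_right₀ ha0]
  have he_ne1 : e ≠ 1 := by
    intro h1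
    rw [h1, map_one, one_mul] at hσa
    exact hσa_ne hσa
  have heq : e ^ q = 1 := by
    rw [he_def, ← pow_mul, mul_comm j q, pow_mul, hζ.pow_eq_one, one_pow]
  have horde : orderOf e = q := by
    rcases hq.eq_one_or_self_of_dvd _ (orderOf_dvd_of_pow_eq_one heq) with h1 | h1
    · exact absurd (orderOf_eq_one_iff.1 h1) he_ne1
    · exact h1
  have hvq : v (algebraMap K L (q : K)) = 1 := aux_vq v hq hcharKv
  have hrep : ∀ b : L, b ≠ 0 → IntermediateField.adjoin K {b} = ⊤ →
      σ b = algebraMap K L e * b →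
      ∀ y : L, y ≠ 0 → ∃ (cc : ℕ → K) (i0 : ℕ), i0 < q ∧ cc i0 ≠ 0 ∧
      (y = ∑ i ∈ Finset.range q, algebraMap K L (cc i) * b ^ i) ∧
      v y = v (algebraMap K L (cc i0)) * (v b) ^ i0 ∧
      (∀ i ∈ Finset.range q, v (algebraMap K L (cc i) * b ^ i) ≤ v y) ∧
      (∀ i, q ≤ i → cc i = 0) := by
    intro b hb0 hbtop hσb y hy0
    obtain ⟨cc, hsum, hvan⟩ := aux_expand hq.pos hdeg hbtop y
    have hex : ∃ i ∈ Finset.range q, cc i ≠ 0 := by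
      by_contra hall
      push_neg at hall
      apply hy0
      rw [hsum]
      exact Finset.sum_eq_zero fun i hi => by rw [hall i hi, map_zero, zero_mul]
    obtain ⟨i0, hi0r, hcc0, hmax⟩ := aux_choose_max v b cc hex
    have hvy : v y = v (algebraMap K L (cc i0) * b ^ i0) := by
      rw [hsum]
      exact aux_master v huni hq hb0 hσb horde hvq cc (Finset.mem_range.1 hi0r) hcc0 hmax
    refine ⟨cc, i0, Finset.mem_range.1 hi0r, hcc0, hsum, ?_,
      fun i hi => by rw [hvy]; exact hmax i hi, hvan⟩
    rw [hvy, Valuation.map_mul, Valuation.map_pow]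
  by_cases hcase : ∃ c : K, c ≠ 0 ∧ v (algebraMap K L c) = v a
  · -- Case I : v a ∈ vK
    obtain ⟨c, hcne, hvc⟩ := hcase
    have hac : algebraMap K L c ≠ 0 := fun h => hcne ((map_eq_zero _).1 h)
    set η : L := (algebraMap K L c)⁻¹ * a with hη_def
    have hη0 : η ≠ 0 := mul_ne_zero (inv_ne_zero hac) ha0
    have hηa : algebraMap K L c * η = a := by rw [hη_def, mul_inv_cancel_left₀ hac]
    have hvη : v η = 1 := by
      rw [hη_def, Valuation.map_mul, map_inv₀, hvc, inv_mul_cancel₀ hva]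
    have hσize : σ η = algebraMap K L e * η := by
      rw [hη_def, map_mul, map_inv₀, AlgEquiv.commutes, hσa]
      ring
    have hηtop : IntermediateField.adjoin K {η} = ⊤ := by
      rw [eq_top_iff, ← hatop, IntermediateField.adjoin_simple_le_iff]
      rw [← hηa]
      exact mul_mem (IntermediateField.algebraMap_mem _ c)
        (IntermediateField.mem_adjoin_simple_self K η)
    have hηq_eq : algebraMap K L ((c ^ q)⁻¹ * k0) = η ^ q := by
      rw [map_mul, map_inv₀, map_pow, hk0, hη_def, mul_pow, inv_pow]
    have hKum : IsKummerGenerator K q η := ⟨hηtop, ⟨(c ^ q)⁻¹ * k0, hηq_eq⟩⟩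
    have hrepη := hrep η hη0 hηtop hσize
    constructor
    · intro _hres
      refine ⟨η, hKum, hvη, ?_, ?_, ?_⟩
      · exact IsUnit.of_mul_eq_one
          ⟨η⁻¹, by rw [Valuation.mem_valuationSubring_iff, map_inv₀, hvη, inv_one]⟩
          (Subtype.ext (mul_inv_cancel₀ hη0))
      · rw [eq_top_iff]
        rintro z -
        obtain ⟨x, rfl⟩ := IsLocalRing.residue_surjective z
        by_cases hx0 : (x : L) = 0
        · rw [show x = 0 from Subtype.ext hx0, map_zero]
          exact Subalgebra.zero_mem _
        obtain ⟨cc, i0, hi0q, hcc0, hsum, hvy, hbnd, hvan⟩ := hrepη (x : L) hx0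
        have hxle : v (x : L) ≤ 1 := x.2
        have hccle : ∀ i, v (algebraMap K L (cc i)) ≤ 1 := by
          intro i
          by_cases hi : i ∈ Finset.range q
          · calc v (algebraMap K L (cc i)) = v (algebraMap K L (cc i) * η ^ i) := by
                  rw [Valuation.map_mul, Valuation.map_pow, hvη, one_pow, mul_one]
            _ ≤ v (x : L) := hbnd i hi
            _ ≤ 1 := hxle
          · rw [hvan i (le_of_not_gt fun hc => hi (Finset.mem_range.2 hc)), map_zero,
              Valuation.map_zero]
            exact zero_le'
        set W : ℕ → v.valuationSubring := fun i => ⟨algebraMap K L (cc i), hccle i⟩ with hW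
        set H : v.valuationSubring := ⟨η, hvη.le⟩ with hH
        have hxeq : x = ∑ i ∈ Finset.range q, W i * H ^ i := by
          apply Subtype.ext
          rw [AddSubmonoidClass.coe_finset_sum]
          simp only [MulMemClass.coe_mul, SubmonoidClass.coe_pow, hW, hH]
          exact hsum
        rw [hxeq, map_sum]
        refine Subalgebra.sum_mem _ fun i hi => ?_
        rw [map_mul, map_pow]
        refine Subalgebra.mul_mem _ ?_
          (Subalgebra.pow_mem _ (Algebra.subset_adjoin (Set.mem_singleton _)) i)
        have hWi : W i = extHom (algebraMap K L) v ⟨cc i, hccle i⟩ := rfl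
        rw [hWi, ← aux_algebraMap_res v ⟨cc i, hccle i⟩]
        exact Subalgebra.algebraMap_mem _ _
      · have hdle : v (algebraMap K L ((c ^ q)⁻¹ * k0)) ≤ 1 := by
          rw [hηq_eq, Valuation.map_pow, hvη, one_pow]
        refine ⟨IsLocalRing.residue _
          (⟨(c ^ q)⁻¹ * k0, hdle⟩ : (v.comap (algebraMap K L)).valuationSubring), ?_⟩
        rw [aux_algebraMap_res v ⟨(c ^ q)⁻¹ * k0, hdle⟩, ← map_pow]
        congr 1
        apply Subtype.ext
        show algebraMap K L ((c ^ q)⁻¹ * k0) = (((⟨η, hvη.le⟩ : v.valuationSubring) ^ q :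
          v.valuationSubring) : L)
        rw [SubmonoidClass.coe_pow]
        exact hηq_eq
    · intro hram
      exfalso
      have hvg : valueGroup (v.comap (algebraMap K L)) = valueGroup v := by
        apply le_antisymm
        · rintro u hu
          obtain ⟨x, hx⟩ := hu
          refine ⟨Units.map (algebraMap K L).toMonoidHom x, Units.ext ?_⟩
          rw [← hx]
          rfl
        · rintro u hu
          obtain ⟨yu, hyu⟩ := hu
          obtain ⟨cc, i0, hi0q, hcc0, hsum, hvy, hbnd, hvan⟩ := hrepη (yu : L) yu.ne_zero
          refine ⟨Units.mk0 (cc i0) hcc0, Units.ext ?_⟩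
          rw [← hyu]
          show v (algebraMap K L (cc i0)) = v (yu : L)
          rw [hvy, hvη, one_pow, mul_one]
      have h1 : ramificationIndex K v = 1 := by
        unfold ramificationIndex
        rw [hvg, Subgroup.relIndex_self]
      exact hq.ne_one (h1.symm.trans hram).symm
  · -- Case II : v a ∉ vK
    push_neg at hcase
    have hclaim : ∀ i : ℕ, 0 < i → i < q → ∀ d : K, d ≠ 0 →
        v (algebraMap K L d) ≠ (v a) ^ i := by
      intro i hipos hiq d hd0 hvd
      have hndvd : ¬ q ∣ i := Nat.not_dvd_of_pos_of_lt hipos hiq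
      have hg1 : Nat.gcd q i = 1 := (Nat.Prime.coprime_iff_not_dvd hq).2 hndvd
      have hb := Nat.gcd_eq_gcd_ab q i
      set A := Nat.gcdA q i with hA
      set B := Nat.gcdB q i with hB
      have h1 : (1 : ℤ) = q * A + i * B := by
        rw [← Nat.cast_one, ← hg1]
        exact_mod_cast hb
      have hvaq : (v a) ^ (q : ℕ) = v (algebraMap K L k0) := by
        rw [← Valuation.map_pow, hk0]
      have hvai : (v a) ^ (i : ℕ) = v (algebraMap K L d) := hvd.symm
      have hcontr : v (algebraMap K L (k0 ^ A * d ^ B)) = v a := by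
        rw [map_mul, map_zpow₀, map_zpow₀, Valuation.map_mul, map_zpow₀, map_zpow₀,
          ← hvaq, ← hvai, ← zpow_natCast (v a) q, ← zpow_natCast (v a) i,
          ← zpow_mul, ← zpow_mul, ← zpow_add₀ hva, ← h1, zpow_one]
      exact hcase _ (mul_ne_zero (zpow_ne_zero _ hk00) (zpow_ne_zero _ hd0)) hcontr
    constructor
    · intro hres
      exfalso
      have hsurj : Function.Surjective (algebraMap
          (IsLocalRing.ResidueField (v.comap (algebraMap K L)).valuationSubring)
          (IsLocalRing.ResidueField v.valuationSubring)) := by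
        intro z
        obtain ⟨x, rfl⟩ := IsLocalRing.residue_surjective z
        by_cases hx0 : (x : L) = 0
        · exact ⟨0, by rw [map_zero, show x = 0 from Subtype.ext hx0, map_zero]⟩
        obtain ⟨cc, i0, hi0q, hcc0, hsum, hvx, hbnd, hvan⟩ := hrep a ha0 hatop hσa (x : L) hx0
        have hxle : v (x : L) ≤ 1 := x.2
        rcases lt_or_eq_of_le hxle with hlt | hvx1
        · refine ⟨0, ?_⟩
          rw [map_zero]
          exact ((IsLocalRing.residue_eq_zero_iff _).2 (aux_mem_maximalIdeal v x hlt)).symm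
        · have hi00 : i0 = 0 := by
            by_contra h0
            refine hclaim i0 (Nat.pos_of_ne_zero h0) hi0q (cc i0)⁻¹ (inv_ne_zero hcc0) ?_
            rw [map_inv₀, map_inv₀]
            exact inv_eq_of_mul_eq_one_right (hvx.symm.trans hvx1)
          have hcc0v : v (algebraMap K L (cc 0)) = 1 := by
            have := hvx.symm.trans hvx1
            rw [hi00, pow_zero, mul_one] at this
            exact this
          have hsmall : ∀ i ∈ (Finset.range q).erase 0,
              v (algebraMap K L (cc i) * a ^ i) < 1 := by
            intro i hi
            obtain ⟨hi0ne, hir⟩ := Finset.mem_erase.1 hi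
            rcases eq_or_ne (cc i) 0 with hz | hz
            · rw [hz, map_zero, zero_mul, Valuation.map_zero]
              exact zero_lt_one
            · have hle1 : v (algebraMap K L (cc i) * a ^ i) ≤ 1 := by
                have h2 := hbnd i hir
                rw [← hvx1]
                exact h2
              rcases lt_or_eq_of_le hle1 with h | h
              · exact h
              · exfalso
                apply hclaim i (Nat.pos_of_ne_zero hi0ne) (Finset.mem_range.1 hir)
                  (cc i)⁻¹ (inv_ne_zero hz)
                rw [map_inv₀, map_inv₀]
                refine inv_eq_of_mul_eq_one_right ?_
                rw [Valuation.map_mul, Valuation.map_pow] at h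
                exact h
          have hCmem : (cc 0 : K) ∈ (v.comap (algebraMap K L)).valuationSubring := hcc0v.le
          refine ⟨IsLocalRing.residue _
            (⟨cc 0, hCmem⟩ : (v.comap (algebraMap K L)).valuationSubring), ?_⟩
          rw [aux_algebraMap_res v ⟨cc 0, hCmem⟩]
          have hdiff : extHom (algebraMap K L) v ⟨cc 0, hCmem⟩ - x ∈
              IsLocalRing.maximalIdeal v.valuationSubring := by
            apply aux_mem_maximalIdeal
            have hcoe : ((extHom (algebraMap K L) v ⟨cc 0, hCmem⟩ - x : v.valuationSubring) : L)
                = algebraMap K L (cc 0) - (x : L) := rfl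
            rw [hcoe, Valuation.map_sub_swap]
            have hsplit : (x : L) - algebraMap K L (cc 0)
                = ∑ i ∈ (Finset.range q).erase 0, algebraMap K L (cc i) * a ^ i := by
              rw [hsum, ← Finset.add_sum_erase _ _ (Finset.mem_range.2 hq.pos), pow_zero, mul_one]
              ring
            rw [hsplit]
            exact v.map_sum_lt one_ne_zero hsmall
          have h2 := (IsLocalRing.residue_eq_zero_iff _).2 hdiff
          rw [map_sub, sub_eq_zero] at h2
          exact h2
      have hrd1 : residueDegree K v = 1 := by
        have ebij : Function.Bijective (Algebra.linearMap
            (IsLocalRing.ResidueField (v.comap (algebraMap K L)).valuationSubring)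
            (IsLocalRing.ResidueField v.valuationSubring)) :=
          ⟨fun x y hxy => RingHom.injective (algebraMap
            (IsLocalRing.ResidueField (v.comap (algebraMap K L)).valuationSubring)
            (IsLocalRing.ResidueField v.valuationSubring)) hxy, hsurj⟩
        have elin := LinearEquiv.ofBijective _ ebij
        show Module.finrank _ _ = 1
        rw [← LinearEquiv.finrank_eq elin]
        exact Module.finrank_self _
      exact hq.ne_one (hrd1.symm.trans hres).symm
    · intro _hram
      refine ⟨a, ⟨hatop, ⟨k0, hk0⟩⟩, ?_⟩
      intro y hy0
      obtain ⟨cc, i0, hi0q, hcc0, hsum, hvy, hbnd, hvan⟩ := hrep a ha0 hatop hσa y hy0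
      exact ⟨cc i0, (i0 : ℤ), hcc0, by rw [hvy, zpow_natCast]⟩
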